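/- Let D be a smooth DNNF and let T be a subgraph of D. Then T is a minimal satisfying subtree of D if and only if for every i = 1,…,n the intersection of T with D_i is a directed path from the root of D to a leaf in L_i. -/

import Mathlib

set_option autoImplicit false

universe u v

/-- A literal: a boolean variable together with a polarity. -/
structure Lit (V : Type u) where
  var : V
  pos : Bool

/-- The complementary literal. -/
def Lit.negate {V : Type u} (l : Lit V) : Lit V := ⟨l.var, !l.pos⟩

/-- A literal is satisfied by a total assignment. -/
def Lit.eval {V : Type u} (a : V → Bool) (l : Lit V) : Prop := a l.var = l.pos

/-- A clause is a (finite in all our uses) disjunction of a set of literals. -/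
abbrev Clause (V : Type u) := Set (Lit V)

/-- A CNF formula is a conjunction of a set of clauses. -/
abbrev CNF (V : Type u) := Set (Clause V)

/-- A clause is satisfied iff some of its literals is. -/
def Clause.Sat {V : Type u} (a : V → Bool) (C : Clause V) : Prop := ∃ l ∈ C, Lit.eval a l

/-- A CNF formula is satisfied iff all of its clauses are. -/
def CNF.Sat {V : Type u} (a : V → Bool) (φ : CNF V) : Prop := ∀ C ∈ φ, Clause.Sat a C

def CNF.Satisfiable {V : Type u} (φ : CNF V) : Prop := ∃ a : V → Bool, CNF.Sat a φ

/-- `φ ⊨ l`. -/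
def CNF.Entails {V : Type u} (φ : CNF V) (l : Lit V) : Prop :=
  ∀ a : V → Bool, CNF.Sat a φ → Lit.eval a l

/-- A partial assignment, i.e. a set of literals, is consistent if it contains
no complementary pair of literals. -/
def ConsistentPA {V : Type u} (α : Set (Lit V)) : Prop := ∀ l ∈ α, Lit.negate l ∉ α

/-- The set of unit clauses corresponding to a partial assignment `α`;
`φ ∪ paUnits α` represents `φ ∧ α`. -/
def paUnits {V : Type u} (α : Set (Lit V)) : CNF V := (fun l => ({l} : Clause V)) '' α

/-- Derivability by repeated unit resolution: from a clause `C ∋ l` and the unit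
clause `¬l` derive `C \ {l}`.  `UnitDeriv φ ∅` means `φ ⊢₁ ⊥` and
`UnitDeriv φ {l}` means `φ ⊢₁ l`. -/
inductive UnitDeriv {V : Type u} (φ : CNF V) : Clause V → Prop where
  | base {C : Clause V} : C ∈ φ → UnitDeriv φ C
  | step {C : Clause V} (l : Lit V) : l ∈ C → UnitDeriv φ C →
      UnitDeriv φ {Lit.negate l} → UnitDeriv φ (C \ {l})

/-- The set of variables occurring in a CNF formula. -/
def CNF.vars {V : Type u} (φ : CNF V) : Set V := ⋃ C ∈ φ, Lit.var '' C

/-- All literals of `α` are literals on the variables `W`. -/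
def LitsOn {V : Type u} (α : Set (Lit V)) (W : Set V) : Prop := ∀ l ∈ α, l.var ∈ W

/-- `φ` is unit refutation complete on the variables `W`. -/
def URCon {V : Type u} (φ : CNF V) (W : Set V) : Prop :=
  ∀ α : Set (Lit V), ConsistentPA α → LitsOn α W →
    ¬ CNF.Satisfiable (φ ∪ paUnits α) → UnitDeriv (φ ∪ paUnits α) ∅

/-- `φ` is propagation complete on the variables `W`. -/
def PCon {V : Type u} (φ : CNF V) (W : Set V) : Prop :=
  ∀ α : Set (Lit V), ConsistentPA α → LitsOn α W →
    ∀ l : Lit V, l.var ∈ W → CNF.Entails (φ ∪ paUnits α) l →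
      UnitDeriv (φ ∪ paUnits α) {l} ∨ UnitDeriv (φ ∪ paUnits α) ∅

/-- `φ` is a CNF encoding of the function `f` with input variables `X`
(the remaining variables of `φ` being auxiliary); `f` is assumed to depend
only on the values of the variables in `X`. -/
def IsEncodingOn {V : Type u} (φ : CNF V) (X : Set V) (f : (V → Bool) → Prop) : Prop :=
  ∀ a : V → Bool, f a ↔ ∃ b : V → Bool, (∀ x ∈ X, b x = a x) ∧ CNF.Sat b φ

/-- The positive literal on a variable. -/
def posL {V : Type u} (x : V) : Lit V := ⟨x, true⟩
/-- The negative literal on a variable. -/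
def negL {V : Type u} (x : V) : Lit V := ⟨x, false⟩

/-! ## Smooth DNNFs over variables with finite domains -/

/-- The label of a node of an NNF: an ∧-node, an ∨-node, or a leaf labeled
with the domain variable `⟦x_i = s⟧`. -/
inductive NLabel (n : ℕ) : Type where
  | And : NLabel n
  | Or : NLabel n
  | Leaf : Fin n → ℕ → NLabel n

/-- An NNF: a rooted DAG whose inner nodes are labeled `∧` or `∨` and whose
leaves are labeled with domain variables `⟦x_i = s⟧` (`s ∈ Dom i`) of the
variables `x₁, …, xₙ` with finite domains `Dom i`.  The edge `edge v u` means
that `u` is a child (an input) of `v`.  Well-formedness conditions are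
collected in `NNF.WF`. -/
structure NNF : Type 1 where
  /-- the nodes -/
  N : Type
  /-- `edge v u`: there is an edge from `v` to its child `u` -/
  edge : N → N → Prop
  /-- the root -/
  root : N
  /-- the number of variables -/
  n : ℕ
  /-- the (finite, non-empty) domains of the variables -/
  Dom : Fin n → Set ℕ
  /-- the label of each node -/
  label : N → NLabel n

namespace NNF

/-- Reachability along directed edges. -/
def Reach (D : NNF) (v u : D.N) : Prop := Relation.ReflTransGen D.edge v u

/-- `var(v)`: the set of variables `x_i` such that a leaf labeled with a domain
variable of `x_i` is reachable from `v`. -/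
def varsOf (D : NNF) (v : D.N) : Set (Fin D.n) :=
  {i | ∃ u s, D.Reach v u ∧ D.label u = NLabel.Leaf i s}

/-- `v` is a leaf. -/
def IsLeaf (D : NNF) (v : D.N) : Prop := ∃ i s, D.label v = NLabel.Leaf i s

/-- `H_i`: the set of nodes `v` with `x_i ∈ var(v)`; the subgraph of `D`
induced on `H_i` is `D_i`. -/
def H (D : NNF) (i : Fin D.n) : Set D.N := {v | i ∈ D.varsOf v}

/-- `L_i`: the set of leaves labeled with domain variables of `x_i`. -/
def Lset (D : NNF) (i : Fin D.n) : Set D.N := {v | ∃ s, D.label v = NLabel.Leaf i s}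

/-- Well-formedness of an NNF: the domains are non-empty; the edge relation is
well-founded (the DAG is acyclic); leaves are labeled with domain variables
(`s ∈ Dom i`) and have no outgoing edges; each domain variable labels at most
one leaf; every node is reachable from the root; for each `i` at least one
domain variable of `x_i` labels a leaf; and every node has a leaf below it
(no node represents a constant). -/
def WF (D : NNF) : Prop :=
  (∀ i, (D.Dom i).Nonempty) ∧
  WellFounded (fun u v : D.N => D.edge v u) ∧
  (∀ v i s, D.label v = NLabel.Leaf i s → s ∈ D.Dom i) ∧
  (∀ v i s, D.label v = NLabel.Leaf i s → ∀ u, ¬ D.edge v u) ∧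
  (∀ v w i s, D.label v = NLabel.Leaf i s → D.label w = NLabel.Leaf i s → v = w) ∧
  (∀ v, D.Reach D.root v) ∧
  (∀ i, ∃ v s, D.label v = NLabel.Leaf i s) ∧
  (∀ v, ∃ i, i ∈ D.varsOf v)

/-- Decomposability: the children of every ∧-node have pairwise disjoint sets
of variables. -/
def Decomposable (D : NNF) : Prop :=
  ∀ v, D.label v = NLabel.And →
    ∀ u₁ u₂, D.edge v u₁ → D.edge v u₂ → u₁ ≠ u₂ →
      Disjoint (D.varsOf u₁) (D.varsOf u₂)

/-- Smoothness: every child of an ∨-node `v` has the same variables as `v`. -/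
def Smooth (D : NNF) : Prop :=
  ∀ v u, D.label v = NLabel.Or → D.edge v u → D.varsOf u = D.varsOf v

/-- A node of `D` evaluates to `true` under the assignment `a` of the domain
variables, where the children are taken with respect to the edge relation `E`
(this generality is used when edges are removed from `D`). -/
inductive EvalWith (D : NNF) (E : D.N → D.N → Prop) (a : Fin D.n × ℕ → Bool) : D.N → Prop where
  | leaf {v : D.N} {i : Fin D.n} {s : ℕ} :
      D.label v = NLabel.Leaf i s → a (i, s) = true → EvalWith D E a v
  | and {v : D.N} : D.label v = NLabel.And →
      (∀ u, E v u → EvalWith D E a u) → EvalWith D E a v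
  | or {v u : D.N} : D.label v = NLabel.Or → E v u →
      EvalWith D E a u → EvalWith D E a v

/-- A node of `D` evaluates to `true` under the assignment `a`. -/
def EvalTrue (D : NNF) (a : Fin D.n × ℕ → Bool) (v : D.N) : Prop :=
  D.EvalWith D.edge a v

/-- `f_D(⟦x⟧)`: the monotone boolean function of the domain variables computed
by `D`. -/
def fD (D : NNF) (a : Fin D.n × ℕ → Bool) : Prop := D.EvalTrue a D.root

/-- The direct encoding constraints: for each `i` exactly one domain variable
of `x_i` is true. -/
def DConsistent (D : NNF) (a : Fin D.n × ℕ → Bool) : Prop :=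
  ∀ i, ∃! s, s ∈ D.Dom i ∧ a (i, s) = true

/-- `f_D'(⟦x⟧)`: the conjunction of `f_D` and the direct encoding constraints. -/
def fD' (D : NNF) (a : Fin D.n × ℕ → Bool) : Prop := D.fD a ∧ D.DConsistent a

/-- A subgraph of `D`: a set of nodes together with a set of edges of `D`
between them. -/
structure Subgraph (D : NNF) : Type where
  mem : Set D.N
  tedge : D.N → D.N → Prop
  le_edge : ∀ {v u}, tedge v u → D.edge v u
  mem_left : ∀ {v u}, tedge v u → v ∈ mem
  mem_right : ∀ {v u}, tedge v u → u ∈ mem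

/-- A minimal satisfying subtree of `D`: a rooted subtree (out-arborescence)
of `D` whose root is the root of `D`, which contains all the `D`-edges out of
each of its ∧-nodes and exactly one `D`-edge out of each of its ∨-nodes. -/
def IsMST (D : NNF) (T : D.Subgraph) : Prop :=
  D.root ∈ T.mem ∧
  (∀ v ∈ T.mem, Relation.ReflTransGen T.tedge D.root v) ∧
  (∀ v ∈ T.mem, v ≠ D.root → ∃! u, T.tedge u v) ∧
  (∀ u, ¬ T.tedge u D.root) ∧
  (∀ v ∈ T.mem, D.label v = NLabel.And → ∀ u, D.edge v u → T.tedge v u) ∧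
  (∀ v ∈ T.mem, D.label v = NLabel.Or → ∃! u, T.tedge v u)

/-- `β_T`: the total assignment of the domain variables that sets to `1`
exactly the domain variables labeling the leaves of `T`. -/
noncomputable def beta (D : NNF) (T : D.Subgraph) : Fin D.n × ℕ → Bool :=
  fun p => @decide (∃ v ∈ T.mem, D.label v = NLabel.Leaf p.1 p.2)
    (Classical.propDecidable _)

/-- A root-to-leaf path in `D_i` (the subgraph of `D` induced on `H_i`),
represented by the list of its nodes. -/
def IsRLPath (D : NNF) (i : Fin D.n) (p : List D.N) : Prop :=
  p ≠ [] ∧ (∀ v ∈ p, v ∈ D.H i) ∧ List.Chain' D.edge p ∧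
  p.head? = some D.root ∧ ∃ t, p.getLast? = some t ∧ t ∈ D.Lset i

/-- A separator in `D_i`: a set `S ⊆ H_i` such that every path in `D_i` from
the root to a leaf contains precisely one node of `S`. -/
def IsSeparator (D : NNF) (i : Fin D.n) (S : Set D.N) : Prop :=
  S ⊆ D.H i ∧ ∀ p, D.IsRLPath i p → ∃! w, w ∈ p ∧ w ∈ S

/-- `D` is covered by the collections `𝒮 i` of separators: each `S ∈ 𝒮 i` is a
separator in `D_i` and the union of `𝒮 i` is `H_i ∖ {ρ}`. -/
def CoveredBy (D : NNF) (𝒮 : ∀ _ : Fin D.n, Set (Set D.N)) : Prop :=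
  ∀ i, (∀ S ∈ 𝒮 i, D.IsSeparator i S) ∧ ⋃₀ 𝒮 i = D.H i \ {D.root}

/-- `D` can be covered by separators. -/
def Covered (D : NNF) : Prop := ∃ 𝒮, D.CoveredBy 𝒮

end NNF

/-- `S` together with the edge relation `E` forms a directed path from `start`
to a node in `fin`: there is a nonempty duplicate-free list `p` of nodes
beginning with `start` and ending in `fin` whose set of members is `S` and
such that `E` holds exactly between the consecutive members of `p`. -/
def IsDirPath {N : Type} (E : N → N → Prop) (S : Set N) (start : N)
    (fin : Set N) : Prop :=
  ∃ p : List N, p ≠ [] ∧ p.Nodup ∧ List.Chain' E p ∧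
    p.head? = some start ∧ (∃ t, p.getLast? = some t ∧ t ∈ fin) ∧
    S = {v | v ∈ p} ∧ (∀ a b, E a b → (a, b) ∈ p.zip p.tail)


set_option autoImplicit false

lemma wfIrrefl {α : Type} {r : α → α → Prop} (h : WellFounded r) (a : α) : ¬ r a a := by
  induction a using h.induction with
  | _ a ih => exact fun hr => ih a hr hr

lemma mem_zipTail {α : Type} {p : List α} {a b : α} :
    (a, b) ∈ p.zip p.tail ↔ ∃ k, p[k]? = some a ∧ p[k+1]? = some b := by
  induction p with
  | nil => simp
  | cons x q ih =>
    cases q with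
    | nil => simp
    | cons y r =>
      simp only [List.tail_cons, List.zip_cons_cons, List.mem_cons] at *
      constructor
      · rintro (h | h)
        · exact ⟨0, by simp [Prod.ext_iff] at h; simp [h.1, h.2]⟩
        · obtain ⟨k, h1, h2⟩ := ih.mp h
          exact ⟨k+1, by simpa using h1, by simpa using h2⟩
      · rintro ⟨k, h1, h2⟩
        cases k with
        | zero =>
          left
          simp at h1 h2
          simp [h1, h2]
        | succ k =>
          right
          exact ih.mpr ⟨k, by simpa using h1, by simpa using h2⟩

lemma zipTail_rel {α : Type} {R : α → α → Prop} {p : List α} (h : List.Chain' R p)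
    {a b : α} (hm : (a, b) ∈ p.zip p.tail) : R a b := by
  obtain ⟨k, h1, h2⟩ := mem_zipTail.mp hm
  obtain ⟨hk1, e1⟩ := List.getElem?_eq_some_iff.mp h1
  obtain ⟨hk2, e2⟩ := List.getElem?_eq_some_iff.mp h2
  have := List.isChain_iff_getElem.mp h k (by omega)
  rw [e1] at this
  rwa [e2] at this

lemma zipTail_mem {α : Type} {p : List α} {a b : α} (hm : (a, b) ∈ p.zip p.tail) :
    a ∈ p ∧ b ∈ p := by
  obtain ⟨k, h1, h2⟩ := mem_zipTail.mp hm
  exact ⟨List.mem_iff_getElem?.mpr ⟨k, h1⟩, List.mem_iff_getElem?.mpr ⟨k+1, h2⟩⟩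

lemma succ_unique {α : Type} {p : List α} (hnd : p.Nodup) {a b c : α}
    (h1 : (a, b) ∈ p.zip p.tail) (h2 : (a, c) ∈ p.zip p.tail) : b = c := by
  obtain ⟨k, hk1, hk2⟩ := mem_zipTail.mp h1
  obtain ⟨m, hm1, hm2⟩ := mem_zipTail.mp h2
  have hkl : k < p.length := (List.getElem?_eq_some_iff.mp hk1).1
  have : k = m := (List.getElem?_inj hkl hnd).mp (hk1.trans hm1.symm)
  subst this
  have := hk2.symm.trans hm2
  simpa using this

lemma pred_unique {α : Type} {p : List α} (hnd : p.Nodup) {a b c : α}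
    (h1 : (a, b) ∈ p.zip p.tail) (h2 : (c, b) ∈ p.zip p.tail) : a = c := by
  obtain ⟨k, hk1, hk2⟩ := mem_zipTail.mp h1
  obtain ⟨m, hm1, hm2⟩ := mem_zipTail.mp h2
  have hkl : k + 1 < p.length := (List.getElem?_eq_some_iff.mp hk2).1
  have : k + 1 = m + 1 := (List.getElem?_inj hkl hnd).mp (hk2.trans hm2.symm)
  have hkm : k = m := by omega
  subst hkm
  have := hk1.symm.trans hm1
  simpa using this

lemma exists_pred {α : Type} {p : List α} {v h : α} (hh : p.head? = some h)
    (hv : v ∈ p) (hne : v ≠ h) : ∃ u, (u, v) ∈ p.zip p.tail := by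
  obtain ⟨k, hk⟩ := List.mem_iff_getElem?.mp hv
  cases k with
  | zero =>
    rw [← List.head?_eq_getElem?, hh] at hk
    exact absurd (Option.some.inj hk).symm hne
  | succ j =>
    have hl : j + 1 < p.length := (List.getElem?_eq_some_iff.mp hk).1
    have hj : j < p.length := by omega
    exact ⟨p[j], mem_zipTail.mpr ⟨j, List.getElem?_eq_getElem hj, hk⟩⟩

lemma exists_succ {α : Type} {p : List α} {v t : α} (ht : p.getLast? = some t)
    (hv : v ∈ p) (hne : v ≠ t) : ∃ u, (v, u) ∈ p.zip p.tail := by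
  obtain ⟨k, hk⟩ := List.mem_iff_getElem?.mp hv
  have hl : k < p.length := (List.getElem?_eq_some_iff.mp hk).1
  by_cases hke : k = p.length - 1
  · subst hke
    rw [List.getLast?_eq_getElem?, hk] at ht
    exact absurd (Option.some.inj ht) hne
  · have hk1 : k + 1 < p.length := by omega
    exact ⟨p[k+1], mem_zipTail.mpr ⟨k, hk, List.getElem?_eq_getElem hk1⟩⟩

lemma head_not_snd {α : Type} {p : List α} (hnd : p.Nodup) {h a : α}
    (hh : p.head? = some h) : (a, h) ∉ p.zip p.tail := by
  intro hm
  obtain ⟨k, hk1, hk2⟩ := mem_zipTail.mp hm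
  have h0 : p[0]? = some h := by rw [← List.head?_eq_getElem?, hh]
  have hl : 0 < p.length := by
    rcases p with _ | _ <;> simp_all
  have := (List.getElem?_inj hl hnd).mp (h0.trans hk2.symm)
  omega

lemma reach_head {α : Type} {R : α → α → Prop} {p : List α} (hc : List.Chain' R p)
    {h v : α} (hh : p.head? = some h) (hv : v ∈ p) : Relation.ReflTransGen R h v := by
  obtain ⟨k, hk⟩ := List.mem_iff_getElem?.mp hv
  clear hv
  induction k generalizing v with
  | zero =>
    rw [← List.head?_eq_getElem?, hh] at hk
    rw [Option.some.inj hk]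
  | succ j ih =>
    have hl : j + 1 < p.length := (List.getElem?_eq_some_iff.mp hk).1
    have hj : j < p.length := by omega
    have hstep := List.isChain_iff_getElem.mp hc j (by omega)
    have hgv : p[j+1] = v := by
      have := List.getElem?_eq_getElem hl
      rw [this] at hk; exact Option.some.inj hk
    have := ih (List.getElem?_eq_getElem hj)
    exact this.tail (hgv ▸ hstep)

lemma chain'_transGen {α : Type} {R : α → α → Prop} {p : List α} (hc : List.Chain' R p)
    {k j : ℕ} (hkj : k < j) (hj : j < p.length) :
    Relation.TransGen R (p.get ⟨k, by omega⟩) (p.get ⟨j, hj⟩) := by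
  induction j with
  | zero => omega
  | succ m ih =>
    have hm : m < p.length := by omega
    have hstep := List.isChain_iff_getElem.mp hc m (by omega)
    rcases Nat.lt_or_ge k m with h | h
    · exact (ih h hm).tail hstep
    · have : k = m := by omega
      subst this
      exact Relation.TransGen.single hstep

lemma nodup_of_chain' {α : Type} {R : α → α → Prop} {p : List α} (hc : List.Chain' R p)
    (hirr : ∀ a, ¬ Relation.TransGen R a a) : p.Nodup := by
  rw [List.nodup_iff_injective_get]
  rintro ⟨k, hk⟩ ⟨j, hj⟩ he
  rcases Nat.lt_trichotomy k j with h | h | h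
  · exact absurd (he ▸ chain'_transGen hc h hj) (hirr _)
  · simp [h]
  · exact absurd (he ▸ chain'_transGen hc h hk) (hirr _)
namespace NNF

lemma var_mono (D : NNF) {v u : D.N} (hvu : D.edge v u) : D.varsOf u ⊆ D.varsOf v := by
  rintro i ⟨w, s, hr, hl⟩
  exact ⟨w, s, Relation.ReflTransGen.head hvu hr, hl⟩

lemma reach_leaf_self (D : NNF) (hwf : D.WF) {v u : D.N} {i : Fin D.n} {s : ℕ}
    (hl : D.label v = NLabel.Leaf i s) (hr : D.Reach v u) : u = v := by
  rcases (Relation.ReflTransGen.cases_head hr) with h | ⟨c, hc, _⟩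
  · exact h.symm
  · exact absurd hc (hwf.2.2.2.1 v i s hl c)

lemma varsOf_leaf (D : NNF) (hwf : D.WF) {v : D.N} {i : Fin D.n} {s : ℕ}
    (hl : D.label v = NLabel.Leaf i s) : D.varsOf v = {i} := by
  ext j
  simp only [Set.mem_singleton_iff]
  constructor
  · rintro ⟨u, s', hr, hl'⟩
    have := reach_leaf_self D hwf hl hr
    subst this
    rw [hl] at hl'
    injection hl' with h1 h2
    exact h1.symm
  · rintro rfl
    exact ⟨v, s, Relation.ReflTransGen.refl, hl⟩

/-- a non-leaf node in `H i` has a child in `H i`. -/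
lemma step_child (D : NNF) {v : D.N} {i : Fin D.n} (hv : i ∈ D.varsOf v)
    (hnl : ∀ j s, D.label v ≠ NLabel.Leaf j s) :
    ∃ u, D.edge v u ∧ i ∈ D.varsOf u := by
  obtain ⟨w, s, hr, hl⟩ := hv
  rcases Relation.ReflTransGen.cases_head hr with h | ⟨c, hc, hr'⟩
  · exact absurd (h ▸ hl) (hnl i s)
  · exact ⟨c, hc, w, s, hr', hl⟩

lemma root_H (D : NNF) (hwf : D.WF) (i : Fin D.n) : D.root ∈ D.H i := by
  obtain ⟨v, s, hl⟩ := hwf.2.2.2.2.2.2.1 i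
  exact ⟨v, s, hwf.2.2.2.2.2.1 v, hl⟩

/-- uniqueness of the child in `H i` of a node of an MST. -/
lemma succ_uniq (D : NNF) (hwf : D.WF) (hdec : D.Decomposable) {T : D.Subgraph}
    (hmst : D.IsMST T) {v u u' : D.N} {i : Fin D.n} (hv : v ∈ T.mem)
    (h1 : T.tedge v u) (h2 : T.tedge v u') (hi1 : i ∈ D.varsOf u)
    (hi2 : i ∈ D.varsOf u') : u = u' := by
  cases hlab : D.label v with
  | And =>
    by_contra hne
    exact Set.disjoint_left.mp
      (hdec v hlab u u' (T.le_edge h1) (T.le_edge h2) hne) hi1 hi2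
  | Or =>
    obtain ⟨w, -, hu⟩ := hmst.2.2.2.2.2 v hv hlab
    exact (hu u h1).trans (hu u' h2).symm
  | Leaf j s => exact absurd (T.le_edge h1) (hwf.2.2.2.1 v j s hlab u)

end NNF
lemma getLast?_cons' {α : Type} (a : α) {p : List α} (h : p ≠ []) :
    (a :: p).getLast? = p.getLast? := by
  cases p with
  | nil => simp at h
  | cons b q => simp [List.getLast?_cons_cons]

namespace NNF

lemma mst_path (D : NNF) (hwf : D.WF) (hsm : D.Smooth) {T : D.Subgraph}
    (hmst : D.IsMST T) (i : Fin D.n) :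
    ∀ v, v ∈ T.mem → i ∈ D.varsOf v → ∃ p : List D.N, p ≠ [] ∧
      List.Chain' T.tedge p ∧ p.head? = some v ∧
      (∃ t, p.getLast? = some t ∧ t ∈ D.Lset i) ∧
      (∀ w ∈ p, w ∈ T.mem ∧ w ∈ D.H i) := by
  intro v
  induction v using hwf.2.1.induction with
  | _ v ih =>
    intro hv hi
    have common : ∀ u, D.edge v u → T.tedge v u → i ∈ D.varsOf u →
        ∃ p : List D.N, p ≠ [] ∧ List.Chain' T.tedge p ∧ p.head? = some v ∧
        (∃ t, p.getLast? = some t ∧ t ∈ D.Lset i) ∧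
        (∀ w ∈ p, w ∈ T.mem ∧ w ∈ D.H i) := by
      intro u hvu ht hiu
      obtain ⟨p, hne, hc, hh, ⟨t, hlast, htL⟩, hmem⟩ := ih u hvu (T.mem_right ht) hiu
      refine ⟨v :: p, by simp, ?_, rfl, ⟨t, ?_, htL⟩, ?_⟩
      · refine List.isChain_cons.mpr ⟨?_, hc⟩
        intro y hy
        rw [hh, Option.mem_some_iff] at hy
        subst hy; exact ht
      · rw [getLast?_cons' v hne]; exact hlast
      · intro w hw
        rcases List.mem_cons.mp hw with rfl | hw
        · exact ⟨hv, hi⟩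
        · exact hmem w hw
    cases hlab : D.label v with
    | Leaf j s =>
      have hij : i = j := by
        have h2 := varsOf_leaf D hwf hlab
        rw [h2] at hi
        exact hi
      refine ⟨[v], by simp, List.isChain_singleton v, rfl, ⟨v, by simp, ⟨s, hij ▸ hlab⟩⟩, ?_⟩
      intro w hw
      simp only [List.mem_singleton] at hw
      subst hw; exact ⟨hv, hi⟩
    | And =>
      obtain ⟨u, hvu, hiu⟩ := step_child D hi (fun j s h => by rw [hlab] at h; exact absurd h (by simp))
      exact common u hvu (hmst.2.2.2.2.1 v hv hlab u hvu) hiu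
    | Or =>
      obtain ⟨u, hu1, -⟩ := hmst.2.2.2.2.2 v hv hlab
      have hvu := T.le_edge hu1
      have hiu : i ∈ D.varsOf u := by rw [hsm v u hlab hvu]; exact hi
      exact common u hvu hu1 hiu

end NNF
theorem stmt9 (D : NNF) (hwf : D.WF) (hdec : D.Decomposable) (hsm : D.Smooth)
    (T : D.Subgraph) :
    D.IsMST T ↔ ∀ i : Fin D.n,
      IsDirPath (fun a b => T.tedge a b ∧ a ∈ D.H i ∧ b ∈ D.H i)
        (T.mem ∩ D.H i) D.root (D.Lset i) := by
  have hirr : ∀ a : D.N, ¬ Relation.TransGen D.edge a a := by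
    intro a ha
    exact wfIrrefl hwf.2.1.transGen a (Relation.transGen_swap.mpr ha)
  constructor
  · intro hmst i
    obtain ⟨p, hne, hc, hh, ⟨t, hlast, htL⟩, hmem⟩ :=
      NNF.mst_path D hwf hsm hmst i D.root hmst.1 (NNF.root_H D hwf i)
    have hcE : List.Chain' D.edge p := hc.imp (fun a b h => T.le_edge h)
    have hnd : p.Nodup := nodup_of_chain' hcE hirr
    have hsub : ∀ v, Relation.ReflTransGen T.tedge D.root v → v ∈ D.H i → v ∈ p := by
      intro v hr
      induction hr with
      | refl => exact fun _ => List.mem_of_mem_head? (by simp [hh])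
      | tail hab hbc ih =>
        rename_i b c
        intro hcH
        have hbH : b ∈ D.H i := NNF.var_mono D (T.le_edge hbc) hcH
        have hbp := ih hbH
        have hbnet : b ≠ t := by
          rintro rfl
          obtain ⟨s, hts⟩ := htL
          exact hwf.2.2.2.1 b i s hts c (T.le_edge hbc)
        obtain ⟨u, huz⟩ := exists_succ hlast hbp hbnet
        have htu : T.tedge b u := zipTail_rel hc huz
        have huH : u ∈ D.H i := (hmem u (zipTail_mem huz).2).2
        have heq : u = c :=
          NNF.succ_uniq D hwf hdec hmst (T.mem_left hbc) htu hbc huH hcH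
        exact heq ▸ (zipTail_mem huz).2
    refine ⟨p, hne, hnd, ?_, hh, ⟨t, hlast, htL⟩, ?_, ?_⟩
    · refine List.isChain_iff_getElem.mpr ?_
      intro k hk
      refine ⟨List.isChain_iff_getElem.mp hc k hk, ?_, ?_⟩
      · exact (hmem _ (List.getElem_mem _)).2
      · exact (hmem _ (List.getElem_mem _)).2
    · ext v
      constructor
      · rintro ⟨hvT, hvH⟩
        exact hsub v (hmst.2.1 v hvT) hvH
      · intro hv
        exact ⟨(hmem v hv).1, (hmem v hv).2⟩
    · rintro a b ⟨hab, haH, hbH⟩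
      have hap : a ∈ p := hsub a (hmst.2.1 a (T.mem_left hab)) haH
      have hanet : a ≠ t := by
        rintro rfl
        obtain ⟨s, hts⟩ := htL
        exact hwf.2.2.2.1 a i s hts b (T.le_edge hab)
      obtain ⟨u, huz⟩ := exists_succ hlast hap hanet
      have htu : T.tedge a u := zipTail_rel hc huz
      have huH : u ∈ D.H i := (hmem u (zipTail_mem huz).2).2
      have heq : u = b :=
        NNF.succ_uniq D hwf hdec hmst (T.mem_left hab) htu hab huH hbH
      exact heq ▸ huz
  · intro hpath
    have hrootmem : D.root ∈ T.mem := by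
      obtain ⟨i, hi⟩ := hwf.2.2.2.2.2.2.2 D.root
      obtain ⟨p, hne, hnd, hc, hh, hlast, hS, hzip⟩ := hpath i
      have hrp : D.root ∈ p := List.mem_of_mem_head? (by simp [hh])
      have : D.root ∈ T.mem ∩ D.H i := by rw [hS]; exact hrp
      exact this.1
    refine ⟨hrootmem, ?_, ?_, ?_, ?_, ?_⟩
    · intro v hv
      obtain ⟨i, hi⟩ := hwf.2.2.2.2.2.2.2 v
      obtain ⟨p, hne, hnd, hc, hh, hlast, hS, hzip⟩ := hpath i
      have hvp : v ∈ p := by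
        have : v ∈ T.mem ∩ D.H i := ⟨hv, hi⟩
        rwa [hS] at this
      exact (reach_head hc hh hvp).lift id (fun a b h => h.1)
    · intro v hv hvne
      obtain ⟨i, hi⟩ := hwf.2.2.2.2.2.2.2 v
      obtain ⟨p, hne, hnd, hc, hh, hlast, hS, hzip⟩ := hpath i
      have hvp : v ∈ p := by
        have : v ∈ T.mem ∩ D.H i := ⟨hv, hi⟩
        rwa [hS] at this
      obtain ⟨u, hu⟩ := exists_pred hh hvp hvne
      have hE := zipTail_rel hc hu
      refine ⟨u, hE.1, ?_⟩
      intro u' hu'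
      have : (u', v) ∈ p.zip p.tail :=
        hzip u' v ⟨hu', NNF.var_mono D (T.le_edge hu') hi, hi⟩
      exact pred_unique hnd this hu
    · intro u hu
      obtain ⟨i, hi⟩ := hwf.2.2.2.2.2.2.2 u
      obtain ⟨p, hne, hnd, hc, hh, hlast, hS, hzip⟩ := hpath i
      have : (u, D.root) ∈ p.zip p.tail :=
        hzip u D.root ⟨hu, hi, NNF.root_H D hwf i⟩
      exact head_not_snd hnd hh this
    · intro v hv hlab u hvu
      obtain ⟨i, hi⟩ := hwf.2.2.2.2.2.2.2 u
      have hvH : v ∈ D.H i := NNF.var_mono D hvu hi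
      obtain ⟨p, hne, hnd, hc, hh, ⟨t, hlast, htL⟩, hS, hzip⟩ := hpath i
      have hvp : v ∈ p := by
        have : v ∈ T.mem ∩ D.H i := ⟨hv, hvH⟩
        rwa [hS] at this
      have hvt : v ≠ t := by
        rintro rfl
        obtain ⟨s, hts⟩ := htL
        rw [hlab] at hts
        cases hts
      obtain ⟨w, hw⟩ := exists_succ hlast hvp hvt
      have hE := zipTail_rel hc hw
      have heq : u = w := by
        by_contra hne'
        exact Set.disjoint_left.mp
          (hdec v hlab u w hvu (T.le_edge hE.1) hne') hi hE.2.2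
      exact heq ▸ hE.1
    · intro v hv hlab
      obtain ⟨i, hi⟩ := hwf.2.2.2.2.2.2.2 v
      obtain ⟨p, hne, hnd, hc, hh, ⟨t, hlast, htL⟩, hS, hzip⟩ := hpath i
      have hvp : v ∈ p := by
        have : v ∈ T.mem ∩ D.H i := ⟨hv, hi⟩
        rwa [hS] at this
      have hvt : v ≠ t := by
        rintro rfl
        obtain ⟨s, hts⟩ := htL
        rw [hlab] at hts
        cases hts
      obtain ⟨w, hw⟩ := exists_succ hlast hvp hvt
      have hE := zipTail_rel hc hw
      refine ⟨w, hE.1, ?_⟩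
      intro u' hu'
      have hiu' : i ∈ D.varsOf u' := by
        rw [hsm v u' hlab (T.le_edge hu')]; exact hi
      have : (v, u') ∈ p.zip p.tail := hzip v u' ⟨hu', hi, hiu'⟩
      exact succ_unique hnd this hw
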